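/- Fix a positive integer s. There exist a constant C(s) and a constant Ξ(s) = √(λ_min(H̄_s)/2) > 0 (where H̄_s is the normalized Hilbert matrix) such that for every ζ ∈ (-π,π] and every N ≥ C(s), the smallest singular value of the matrix U(ζ,N,s) ∈ ℂ^{(N+1)×s}, whose j-th column is the normalized limit vector ũ_j with (ũ_j)_k = (ik)^{j-1}e^{ikζ}/‖u_j‖, satisfies σ_min(U(ζ,N,s)) ≥ Ξ(s). -/

import Mathlib

open Complex Finset

/-- The `s × s` normalized Hilbert matrix (indexed from `0`). -/
noncomputable def normHilbert (s : ℕ) : Matrix (Fin s) (Fin s) ℝ :=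
  Matrix.of fun j l =>
    Real.sqrt (2 * (j : ℕ) + 1) * Real.sqrt (2 * (l : ℕ) + 1) /
      ((j : ℕ) + (l : ℕ) + 1)

section Helpers

open MeasureTheory Matrix


lemma pow_succ_sub_bounds {x : ℝ} (hx : 0 ≤ x) (m : ℕ) :
    (m+1 : ℝ) * x^m ≤ (x+1)^(m+1) - x^(m+1) ∧
    (x+1)^(m+1) - x^(m+1) ≤ (m+1 : ℝ) * (x+1)^m := by
  have h := geom_sum₂_mul (x+1) x (m+1)
  have hsub : (x+1) - x = 1 := by ring
  rw [hsub, mul_one] at h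
  have hx1 : (0:ℝ) ≤ x + 1 := by linarith
  constructor
  · rw [← h]
    calc (m+1 : ℝ) * x^m = ∑ _i ∈ range (m+1), x^m := by
          rw [Finset.sum_const, card_range]; push_cast; ring
      _ ≤ ∑ i ∈ range (m+1), (x+1)^i * x^(m-i) := by
          apply Finset.sum_le_sum
          intro i hi
          rw [mem_range] at hi
          calc x^m = x^i * x^(m-i) := by rw [← pow_add]; congr 1; omega
            _ ≤ (x+1)^i * x^(m-i) := by
                exact mul_le_mul_of_nonneg_right (pow_le_pow_left₀ hx (by linarith) i)
                  (pow_nonneg hx _)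
  · rw [← h]
    calc ∑ i ∈ range (m+1), (x+1)^i * x^(m-i)
        ≤ ∑ _i ∈ range (m+1), (x+1)^m := by
          apply Finset.sum_le_sum
          intro i hi
          rw [mem_range] at hi
          calc (x+1)^i * x^(m-i) ≤ (x+1)^i * (x+1)^(m-i) :=
                mul_le_mul_of_nonneg_left (pow_le_pow_left₀ hx (by linarith) _)
                  (pow_nonneg hx1 _)
            _ = (x+1)^m := by rw [← pow_add]; congr 1; omega
      _ = (m+1:ℝ) * (x+1)^m := by rw [Finset.sum_const, card_range]; push_cast; ring

noncomputable def powS (m N : ℕ) : ℝ := ∑ k ∈ range (N+1), (k:ℝ)^m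

lemma powS_lower (m N : ℕ) : (N:ℝ)^(m+1) ≤ (m+1) * powS m N := by
  induction N with
  | zero =>
    simp only [powS, Nat.cast_zero]
    rw [zero_pow (by omega)]
    positivity
  | succ n ih =>
    have hb := (pow_succ_sub_bounds (x := (n:ℝ)) (by positivity) m).2
    have : powS m (n+1) = powS m n + ((n:ℝ)+1)^m := by
      simp [powS, Finset.sum_range_succ]
    rw [this]
    push_cast
    push_cast at ih hb
    nlinarith

lemma powS_upper (m N : ℕ) : (m+1) * powS m N ≤ ((N:ℝ)+1)^(m+1) := by
  induction N with
  | zero =>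
    simp only [powS, Nat.cast_zero]
    rw [Finset.sum_range_one]
    rcases Nat.eq_zero_or_pos m with hm | hm
    · subst hm; norm_num
    · rw [show ((0:ℕ):ℝ) = 0 by norm_num, zero_pow (by omega : m ≠ 0)]
      rw [mul_zero]; positivity
  | succ n ih =>
    have hb := (pow_succ_sub_bounds (x := (n:ℝ)+1) (by positivity) m).1
    have : powS m (n+1) = powS m n + ((n:ℝ)+1)^m := by
      simp [powS, Finset.sum_range_succ]
    rw [this]
    push_cast
    push_cast at ih hb
    nlinarith

lemma normHilbert_posDef (s : ℕ) : (normHilbert s).PosDef := by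
  classical
  refine Matrix.PosDef.of_dotProduct_mulVec_pos ?_ ?_
  · ext j l
    simp [normHilbert, Matrix.conjTranspose_apply]
    ring
  intro x hx
  set a : Fin s → ℝ := fun j => Real.sqrt (2 * (j:ℕ) + 1) with ha
  have ha_pos : ∀ j, 0 < a j := fun j => Real.sqrt_pos.2 (by positivity)
  set f : ℝ → ℝ := fun t => (∑ j : Fin s, x j * a j * t ^ (j:ℕ))^2 with hf
  have hcont : Continuous f := by
    apply Continuous.pow
    apply continuous_finset_sum
    intro j _
    fun_prop
  have key : dotProduct (star x) ((normHilbert s).mulVec x)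
      = ∫ t in (0:ℝ)..1, f t := by
    have expand : ∀ t : ℝ, f t = ∑ j : Fin s, ∑ l : Fin s,
        (x j * a j * x l * a l) * t ^ ((j:ℕ) + (l:ℕ)) := by
      intro t
      show (∑ j : Fin s, x j * a j * t ^ (j:ℕ))^2 = _
      rw [sq, Finset.sum_mul_sum]
      congr 1; ext j; congr 1; ext l; rw [pow_add]; ring
    rw [intervalIntegral.integral_congr (g := fun t => ∑ j : Fin s, ∑ l : Fin s,
        (x j * a j * x l * a l) * t ^ ((j:ℕ) + (l:ℕ))) (fun t _ => expand t)]
    have hc : ∀ j : Fin s, Continuous (fun t : ℝ => ∑ l : Fin s,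
        (x j * a j * x l * a l) * t ^ ((j:ℕ) + (l:ℕ))) := by
      intro j
      apply continuous_finset_sum
      intro l _
      fun_prop
    rw [intervalIntegral.integral_finset_sum (fun j _ =>
      Continuous.intervalIntegrable (hc j) 0 1)]
    have inner : ∀ j : Fin s, (∫ t in (0:ℝ)..1, ∑ l : Fin s,
        (x j * a j * x l * a l) * t ^ ((j:ℕ) + (l:ℕ)))
        = ∑ l : Fin s, (x j * a j * x l * a l) / (((j:ℕ):ℝ) + ((l:ℕ):ℝ) + 1) := by
      intro j
      rw [intervalIntegral.integral_finset_sum (fun l _ =>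
        Continuous.intervalIntegrable (by fun_prop) 0 1)]
      apply Finset.sum_congr rfl; intro l _
      rw [intervalIntegral.integral_const_mul, integral_pow]
      push_cast
      rw [one_pow, zero_pow (by omega)]
      ring
    simp_rw [inner]
    simp only [dotProduct, Matrix.mulVec, Pi.star_apply, star_trivial,
      normHilbert, Matrix.of_apply, Finset.mul_sum]
    apply Finset.sum_congr rfl; intro j _
    apply Finset.sum_congr rfl; intro l _
    have h1 : (0:ℝ) < ((j:ℕ):ℝ) + ((l:ℕ):ℝ) + 1 := by positivity
    rw [ha]
    field_simp
  rw [key, intervalIntegral.integral_of_le zero_le_one]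
  have hnonneg : 0 ≤ᵐ[volume.restrict (Set.Ioc (0:ℝ) 1)] f :=
    Filter.Eventually.of_forall (fun t => sq_nonneg _)
  have hint : IntegrableOn f (Set.Ioc (0:ℝ) 1) :=
    hcont.integrableOn_Ioc
  rw [setIntegral_pos_iff_support_of_nonneg_ae hnonneg hint]
  set Q : Polynomial ℝ := ∑ j : Fin s, Polynomial.C (x j * a j) * Polynomial.X ^ (j:ℕ) with hQ
  obtain ⟨j₀, hj₀⟩ := Function.ne_iff.1 hx
  have hQne : Q ≠ 0 := by
    intro h
    have : Q.coeff (j₀:ℕ) = x j₀ * a j₀ := by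
      rw [hQ, Polynomial.finset_sum_coeff]
      rw [Finset.sum_eq_single j₀]
      · rw [Polynomial.coeff_C_mul, Polynomial.coeff_X_pow, if_pos rfl, mul_one]
      · intro b _ hb
        simp only [Polynomial.coeff_C_mul, Polynomial.coeff_X_pow]
        rw [if_neg (fun hc => hb (Fin.ext hc.symm)), mul_zero]
      · simp
    rw [h] at this
    simp at this
    rcases this with h1 | h2
    · exact hj₀ h1
    · exact (ha_pos j₀).ne' h2
  have hroots : {t : ℝ | Q.IsRoot t}.Finite := Polynomial.finite_setOf_isRoot hQne
  have hzero : {t : ℝ | f t = 0} ⊆ {t : ℝ | Q.IsRoot t} := by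
    intro t ht
    simp only [Set.mem_setOf_eq, hf, sq_eq_zero_iff] at ht
    simp only [Set.mem_setOf_eq, Polynomial.IsRoot, hQ, Polynomial.eval_finset_sum]
    simpa [mul_comm] using ht
  have hmeas0 : volume {t : ℝ | f t = 0} = 0 :=
    measure_mono_null hzero (hroots.measure_zero volume)
  have hsub : Set.Ioc (0:ℝ) 1 \ {t : ℝ | f t = 0} ⊆ Function.support f ∩ Set.Ioc 0 1 := by
    intro t ⟨ht1, ht2⟩
    exact ⟨ht2, ht1⟩
  calc (0:ENNReal) < volume (Set.Ioc (0:ℝ) 1) := by simp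
    _ = volume (Set.Ioc (0:ℝ) 1 \ {t : ℝ | f t = 0}) := (measure_diff_null hmeas0).symm
    _ ≤ volume (Function.support f ∩ Set.Ioc 0 1) := measure_mono hsub


lemma rayleigh_lower {s : ℕ} {A : Matrix (Fin s) (Fin s) ℝ} (hA : A.IsHermitian) {lam : ℝ}
    (hlam : ∀ i, lam ≤ hA.eigenvalues i) (y : Fin s → ℝ) :
    lam * (y ⬝ᵥ y) ≤ y ⬝ᵥ A *ᵥ y := by
  classical
  set U : Matrix (Fin s) (Fin s) ℝ := (hA.eigenvectorUnitary : Matrix (Fin s) (Fin s) ℝ)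
  have hU : U * star U = 1 := (Matrix.mem_unitaryGroup_iff).mp hA.eigenvectorUnitary.2
  have hsub : (A - lam • (1 : Matrix (Fin s) (Fin s) ℝ)).PosSemidef := by
    have hdiag : (Matrix.diagonal (fun i => hA.eigenvalues i - lam)).PosSemidef :=
      Matrix.PosSemidef.diagonal (fun i => sub_nonneg.2 (hlam i))
    have heq : A - lam • (1 : Matrix (Fin s) (Fin s) ℝ)
        = U * Matrix.diagonal (fun i => hA.eigenvalues i - lam) * star U := by
      have hspec := hA.spectral_theorem
      rw [RCLike.ofReal_real_eq_id, Unitary.conjStarAlgAut_apply] at hspec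
      have h1 : Matrix.diagonal (fun i => hA.eigenvalues i - lam)
          = Matrix.diagonal (id ∘ hA.eigenvalues) - lam • 1 := by
        ext i j
        rcases eq_or_ne i j with h | h
        · subst h
          simp [Matrix.one_apply, Matrix.diagonal_apply_eq]
        · simp [Matrix.diagonal_apply_ne _ h, Matrix.one_apply_ne h]
      rw [h1, Matrix.mul_sub, Matrix.sub_mul, ← hspec]
      congr 1
      rw [Matrix.mul_smul, mul_one, Matrix.smul_mul, hU]
    rw [heq]
    exact hdiag.mul_mul_conjTranspose_same U
  have := hsub.dotProduct_mulVec_nonneg y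
  simp only [Matrix.sub_mulVec, dotProduct_sub, Matrix.smul_mulVec,
    Matrix.one_mulVec, dotProduct_smul, star_trivial, smul_eq_mul] at this
  linarith

lemma rayleigh_lower_complex {s : ℕ} {A : Matrix (Fin s) (Fin s) ℝ} (hA : A.IsHermitian)
    {lam : ℝ} (hlam : ∀ i, lam ≤ hA.eigenvalues i) (d : Fin s → ℂ) :
    lam * ∑ j, Complex.normSq (d j) ≤
      ∑ j, ∑ l, A j l * ((starRingEnd ℂ) (d j) * d l).re := by
  have h1 := rayleigh_lower hA hlam (fun j => (d j).re)
  have h2 := rayleigh_lower hA hlam (fun j => (d j).im)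
  simp only [dotProduct, Matrix.mulVec, Finset.mul_sum] at h1 h2
  have g1 : ∑ j, lam * ((d j).re * (d j).re) ≤ ∑ j, ∑ l, (d j).re * (A j l * (d l).re) := by
    simpa [Finset.mul_sum] using h1
  have g2 : ∑ j, lam * ((d j).im * (d j).im) ≤ ∑ j, ∑ l, (d j).im * (A j l * (d l).im) := by
    simpa [Finset.mul_sum] using h2
  have hL : lam * ∑ j, Complex.normSq (d j)
      = ∑ j, lam * ((d j).re * (d j).re) + ∑ j, lam * ((d j).im * (d j).im) := by
    rw [← Finset.sum_add_distrib, Finset.mul_sum]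
    apply Finset.sum_congr rfl; intro j _
    rw [Complex.normSq_apply]; ring
  have hR : ∑ j, ∑ l, A j l * ((starRingEnd ℂ) (d j) * d l).re
      = ∑ j, ∑ l, (d j).re * (A j l * (d l).re)
        + ∑ j, ∑ l, (d j).im * (A j l * (d l).im) := by
    rw [← Finset.sum_add_distrib]
    apply Finset.sum_congr rfl; intro j _
    rw [← Finset.sum_add_distrib]
    apply Finset.sum_congr rfl; intro l _
    rw [Complex.mul_re]
    simp
    ring
  rw [hL, hR]
  exact add_le_add g1 g2

lemma one_add_pow_le {x : ℝ} (h0 : 0 ≤ x) (h1 : x ≤ 1) (m : ℕ) :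
    (1+x)^m ≤ 1 + ((2:ℝ)^m - 1)*x := by
  induction m with
  | zero => norm_num
  | succ m ih =>
    have h2 : (1:ℝ) ≤ 2^m := one_le_pow₀ (by norm_num)
    calc (1+x)^(m+1) = (1+x)^m * (1+x) := by ring
      _ ≤ (1 + (2^m - 1)*x) * (1+x) := by nlinarith [pow_nonneg (by linarith : (0:ℝ) ≤ 1+x) m]
      _ ≤ 1 + (2^(m+1) - 1)*x := by
          rw [pow_succ]
          nlinarith [mul_nonneg (by linarith : (0:ℝ) ≤ 2^m - 1)
            (by nlinarith : (0:ℝ) ≤ x - x^2)]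

lemma powS_pos {m N : ℕ} (hN : 1 ≤ N) : 0 < powS m N := by
  have h := powS_lower m N
  have hN' : (0:ℝ) < (N:ℝ) := by exact_mod_cast hN
  have : (0:ℝ) < (N:ℝ)^(m+1) := by positivity
  nlinarith [this.trans_le h]

lemma sqrt_powS_lower {m N : ℕ} (hN : 1 ≤ N) :
    (N:ℝ)^m * Real.sqrt N / Real.sqrt (2*m+1) ≤ Real.sqrt (powS (2*m) N) := by
  have hN' : (0:ℝ) < (N:ℝ) := by exact_mod_cast hN
  have key : ((N:ℝ)^m * Real.sqrt N / Real.sqrt (2*m+1))^2 = (N:ℝ)^(2*m+1) / (2*m+1) := by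
    rw [div_pow, mul_pow, Real.sq_sqrt hN'.le, Real.sq_sqrt (by positivity)]
    rw [← pow_mul]
    ring_nf
  have h1 : (N:ℝ)^(2*m+1) / (2*m+1) ≤ powS (2*m) N := by
    have := powS_lower (2*m) N
    rw [div_le_iff₀ (by positivity)]
    push_cast at this ⊢
    linarith
  calc (N:ℝ)^m * Real.sqrt N / Real.sqrt (2*m+1)
      = Real.sqrt (((N:ℝ)^m * Real.sqrt N / Real.sqrt (2*m+1))^2) :=
        (Real.sqrt_sq (by positivity)).symm
    _ = Real.sqrt ((N:ℝ)^(2*m+1) / (2*m+1)) := by rw [key]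
    _ ≤ _ := Real.sqrt_le_sqrt h1

lemma sqrt_powS_upper {m N : ℕ} (hN : 1 ≤ N) :
    Real.sqrt (powS (2*m) N) ≤ ((N:ℝ)+1)^m * Real.sqrt ((N:ℝ)+1) / Real.sqrt (2*m+1) := by
  have hN' : (0:ℝ) < (N:ℝ) := by exact_mod_cast hN
  have key : (((N:ℝ)+1)^m * Real.sqrt ((N:ℝ)+1) / Real.sqrt (2*m+1))^2
      = ((N:ℝ)+1)^(2*m+1) / (2*m+1) := by
    rw [div_pow, mul_pow, Real.sq_sqrt (by positivity), Real.sq_sqrt (by positivity)]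
    rw [← pow_mul]
    ring_nf
  have h1 : powS (2*m) N ≤ ((N:ℝ)+1)^(2*m+1) / (2*m+1) := by
    have := powS_upper (2*m) N
    rw [le_div_iff₀ (by positivity)]
    push_cast at this ⊢
    linarith
  calc Real.sqrt (powS (2*m) N) ≤ Real.sqrt (((N:ℝ)+1)^(2*m+1) / (2*m+1)) :=
        Real.sqrt_le_sqrt h1
    _ = _ := by rw [← key, Real.sqrt_sq (by positivity)]

lemma aux_one_sub_inv {R : ℝ} (hR : 1 ≤ R) : 1 - R⁻¹ ≤ R - 1 := by
  have h0 : 0 < R := lt_of_lt_of_le one_pos hR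
  nlinarith [inv_mul_cancel₀ h0.ne', sq_nonneg (R-1), h0]

lemma entry_bound {s N : ℕ} (hN : 1 ≤ N) (j l : Fin s) :
    |powS ((j:ℕ)+(l:ℕ)) N /
      (Real.sqrt (powS (2*(j:ℕ)) N) * Real.sqrt (powS (2*(l:ℕ)) N)) - normHilbert s j l|
      ≤ (2:ℝ)^(2*s) / N := by
  have hN' : (0:ℝ) < N := by exact_mod_cast hN
  set p : ℕ := (j:ℕ) + (l:ℕ) with hp
  set aj : ℝ := Real.sqrt (2*(j:ℕ)+1) with haj
  set al : ℝ := Real.sqrt (2*(l:ℕ)+1) with hal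
  set uj : ℝ := Real.sqrt (powS (2*(j:ℕ)) N) with huj
  set ul : ℝ := Real.sqrt (powS (2*(l:ℕ)) N) with hul
  have haj_pos : 0 < aj := Real.sqrt_pos.2 (by positivity)
  have hal_pos : 0 < al := Real.sqrt_pos.2 (by positivity)
  have huj_pos : 0 < uj := Real.sqrt_pos.2 (powS_pos hN)
  have hul_pos : 0 < ul := Real.sqrt_pos.2 (powS_pos hN)
  set H : ℝ := normHilbert s j l with hHdef
  have hH_eq : H = aj * al / ((p:ℝ)+1) := by
    simp only [hHdef, normHilbert, Matrix.of_apply, haj, hal, hp]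
    push_cast; ring_nf
  have hH_pos : 0 < H := by rw [hH_eq]; positivity
  have hH_le_one : H ≤ 1 := by
    rw [hH_eq, div_le_one (by positivity)]
    have h1 : aj * al = Real.sqrt ((2*(j:ℕ)+1) * (2*(l:ℕ)+1)) :=
      (Real.sqrt_mul (by positivity) _).symm
    have h2 : ((2*(j:ℕ)+1) : ℝ) * (2*(l:ℕ)+1) ≤ ((p:ℝ)+1)^2 := by
      rw [hp]; push_cast; nlinarith [sq_nonneg ((j:ℕ) - (l:ℕ) : ℝ)]
    calc aj * al = Real.sqrt ((2*(j:ℕ)+1) * (2*(l:ℕ)+1)) := h1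
      _ ≤ Real.sqrt (((p:ℝ)+1)^2) := Real.sqrt_le_sqrt h2
      _ = (p:ℝ)+1 := Real.sqrt_sq (by positivity)
  -- bounds on uj * ul
  have DL : (N:ℝ)^p * N / (aj*al) ≤ uj * ul := by
    have h := mul_le_mul (sqrt_powS_lower (m := (j:ℕ)) hN) (sqrt_powS_lower (m := (l:ℕ)) hN)
      (by positivity) huj_pos.le
    have hprod : (N:ℝ)^(j:ℕ) * Real.sqrt N * ((N:ℝ)^(l:ℕ) * Real.sqrt N) = (N:ℝ)^p * N := by
      rw [hp, pow_add]
      linear_combination ((N:ℝ)^(j:ℕ) * (N:ℝ)^(l:ℕ)) * Real.mul_self_sqrt hN'.le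
    calc (N:ℝ)^p * N / (aj*al)
        = ((N:ℝ)^(j:ℕ) * Real.sqrt N / aj) * ((N:ℝ)^(l:ℕ) * Real.sqrt N / al) := by
          rw [div_mul_div_comm, hprod]
      _ ≤ uj * ul := h
  have DU : uj * ul ≤ ((N:ℝ)+1)^p * ((N:ℝ)+1) / (aj*al) := by
    have h := mul_le_mul (sqrt_powS_upper (m := (j:ℕ)) hN) (sqrt_powS_upper (m := (l:ℕ)) hN)
      hul_pos.le (by positivity)
    have hprod : ((N:ℝ)+1)^(j:ℕ) * Real.sqrt ((N:ℝ)+1) * (((N:ℝ)+1)^(l:ℕ) * Real.sqrt ((N:ℝ)+1))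
        = ((N:ℝ)+1)^p * ((N:ℝ)+1) := by
      rw [hp, pow_add]
      linear_combination (((N:ℝ)+1)^(j:ℕ) * ((N:ℝ)+1)^(l:ℕ)) *
        Real.mul_self_sqrt (by positivity : (0:ℝ) ≤ (N:ℝ)+1)
    calc uj * ul ≤ (((N:ℝ)+1)^(j:ℕ) * Real.sqrt ((N:ℝ)+1) / aj)
          * (((N:ℝ)+1)^(l:ℕ) * Real.sqrt ((N:ℝ)+1) / al) := h
      _ = ((N:ℝ)+1)^p * ((N:ℝ)+1) / (aj*al) := by
          rw [div_mul_div_comm, hprod]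
  set g : ℝ := powS p N / (uj * ul) with hg
  set R : ℝ := (((N:ℝ)+1)/N)^(p+1) with hR
  have hR_ge : 1 ≤ R := one_le_pow₀ (by rw [le_div_iff₀ hN', one_mul]; linarith only [])
  have hR_pos : 0 < R := by positivity
  -- upper bound on g
  have hg_upper : g ≤ H * R := by
    have hnum : powS p N ≤ ((N:ℝ)+1)^(p+1) / ((p:ℝ)+1) := by
      rw [le_div_iff₀ (by positivity)]
      have := powS_upper p N
      push_cast at this ⊢; linarith only [this]
    have h := div_le_div₀ (by positivity) hnum (by positivity) DL
    calc g ≤ (((N:ℝ)+1)^(p+1) / ((p:ℝ)+1)) / ((N:ℝ)^p * N / (aj*al)) := h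
      _ = H * R := by
          rw [hH_eq, hR, div_pow]
          rw [pow_succ]
          field_simp
          ring
  -- lower bound on g
  have hg_lower : H * R⁻¹ ≤ g := by
    have hnum : (N:ℝ)^(p+1) / ((p:ℝ)+1) ≤ powS p N := by
      rw [div_le_iff₀ (by positivity)]
      have := powS_lower p N
      push_cast at this ⊢; linarith only [this]
    have h := div_le_div₀ (powS_pos (N := N) (m := p) hN).le hnum (by positivity) DU
    calc H * R⁻¹ = ((N:ℝ)^(p+1) / ((p:ℝ)+1)) / (((N:ℝ)+1)^p * ((N:ℝ)+1) / (aj*al)) := by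
          rw [hH_eq, hR, div_pow]
          rw [pow_succ]
          field_simp
      _ ≤ g := h
  -- bound on R - 1
  have hp2s : p + 1 ≤ 2*s := by
    have h1 := j.isLt; have h2 := l.isLt; omega
  have hRm1 : R - 1 ≤ (2:ℝ)^(2*s) / N := by
    have hx0 : (0:ℝ) ≤ 1/N := by positivity
    have hx1 : (1:ℝ)/N ≤ 1 := by rw [div_le_one hN']; exact_mod_cast hN
    have hRe : R = (1 + 1/N)^(p+1) := by rw [hR]; congr 1; field_simp
    have h1 := one_add_pow_le hx0 hx1 (p+1)
    have h2 : (2:ℝ)^(p+1) ≤ (2:ℝ)^(2*s) := pow_le_pow_right₀ (by norm_num) hp2s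
    rw [hRe]
    calc (1 + 1/(N:ℝ))^(p+1) - 1 ≤ ((2:ℝ)^(p+1) - 1) * (1/N) := by linarith only [h1]
      _ ≤ (2:ℝ)^(2*s) / N := by
          rw [div_eq_mul_one_div ((2:ℝ)^(2*s)) N]
          apply mul_le_mul_of_nonneg_right (by linarith only [h2]) hx0
  -- conclude
  rw [abs_sub_le_iff]
  constructor
  · calc g - H ≤ H * R - H := by linarith only [hg_upper]
      _ = H * (R - 1) := by ring
      _ ≤ 1 * (R - 1) := mul_le_mul_of_nonneg_right hH_le_one (by linarith only [hR_ge])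
      _ ≤ (2:ℝ)^(2*s) / N := by linarith only [hRm1]
  · have h2 : 1 - R⁻¹ ≤ R - 1 := aux_one_sub_inv hR_ge
    calc H - g ≤ H - H * R⁻¹ := by linarith only [hg_lower]
      _ = H * (1 - R⁻¹) := by ring
      _ ≤ 1 * (R - 1) := by
          apply mul_le_mul hH_le_one h2 ?_ (by norm_num)
          have h3 : R⁻¹ ≤ 1 := by
            rw [inv_le_one_iff₀]; right; exact hR_ge
          linarith only [h3]
      _ ≤ (2:ℝ)^(2*s) / N := by linarith only [hRm1]

lemma norm_u {N : ℕ} {ζ : ℝ} (m : ℕ) (u : EuclideanSpace ℂ (Fin (N+1)))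
    (hu : ∀ k : Fin (N+1), u k = (Complex.I * (k:ℕ)) ^ m * Complex.exp (Complex.I * (k:ℕ) * ζ)) :
    ‖u‖ = Real.sqrt (powS (2*m) N) := by
  rw [EuclideanSpace.norm_eq]
  congr 1
  rw [powS, ← Fin.sum_univ_eq_sum_range]
  apply Finset.sum_congr rfl; intro k _
  rw [hu k, norm_mul, norm_pow, norm_mul, Complex.norm_I, one_mul]
  have he : ‖Complex.exp (Complex.I * (k:ℕ) * ζ)‖ = 1 := by
    rw [Complex.norm_exp]
    convert Real.exp_zero using 2
    simp
  rw [he, mul_one, Complex.norm_natCast, ← pow_mul, mul_comm m 2]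

lemma exp_conj_mul {N : ℕ} {ζ : ℝ} (k : Fin (N+1)) :
    (starRingEnd ℂ) (Complex.exp (Complex.I * (k:ℕ) * ζ)) * Complex.exp (Complex.I * (k:ℕ) * ζ) = 1 := by
  rw [← Complex.exp_conj, ← Complex.exp_add]
  have : (starRingEnd ℂ) (Complex.I * (k:ℕ) * ζ) = -(Complex.I * (k:ℕ) * ζ) := by
    simp [_root_.map_mul, Complex.conj_I, Complex.conj_natCast, Complex.conj_ofReal]
  rw [this, neg_add_cancel, Complex.exp_zero]

lemma inner_u {N : ℕ} {ζ : ℝ} (m m' : ℕ) (u v : EuclideanSpace ℂ (Fin (N+1)))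
    (hu : ∀ k : Fin (N+1), u k = (Complex.I * (k:ℕ)) ^ m * Complex.exp (Complex.I * (k:ℕ) * ζ))
    (hv : ∀ k : Fin (N+1), v k = (Complex.I * (k:ℕ)) ^ m' * Complex.exp (Complex.I * (k:ℕ) * ζ)) :
    (inner ℂ u v : ℂ) = (starRingEnd ℂ Complex.I)^m * Complex.I^m' * ((powS (m+m') N : ℝ) : ℂ) := by
  rw [PiLp.inner_apply]
  have hterm : ∀ k : Fin (N+1), (inner ℂ (u k) (v k) : ℂ)
      = (starRingEnd ℂ Complex.I)^m * Complex.I^m' * (((k:ℕ):ℂ))^(m+m') := by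
    intro k
    rw [RCLike.inner_apply, hu k, hv k, mul_comm ((Complex.I * _) ^ m' * _)]
    rw [_root_.map_mul, map_pow, _root_.map_mul, Complex.conj_natCast]
    calc (starRingEnd ℂ Complex.I * (k:ℕ))^m * (starRingEnd ℂ) (Complex.exp (Complex.I * (k:ℕ) * ζ))
          * ((Complex.I * (k:ℕ)) ^ m' * Complex.exp (Complex.I * (k:ℕ) * ζ))
        = (starRingEnd ℂ Complex.I * (k:ℕ))^m * (Complex.I * (k:ℕ)) ^ m'
          * ((starRingEnd ℂ) (Complex.exp (Complex.I * (k:ℕ) * ζ)) * Complex.exp (Complex.I * (k:ℕ) * ζ)) := by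
          ring
      _ = (starRingEnd ℂ Complex.I * (k:ℕ))^m * (Complex.I * (k:ℕ)) ^ m' := by
          rw [exp_conj_mul, mul_one]
      _ = (starRingEnd ℂ Complex.I)^m * Complex.I^m' * (((k:ℕ):ℂ))^(m+m') := by
          rw [mul_pow, mul_pow, pow_add]
          ring
  rw [Fintype.sum_congr _ _ hterm, ← Finset.mul_sum]
  congr 1
  rw [powS, ← Fin.sum_univ_eq_sum_range]
  push_cast
  rfl

end Helpers

/-- Conditioning of the normalized limit basis: for `N` large enough (depending only on
`s`), the smallest singular value of the matrix whose columns are the normalized limit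
vectors `ũ_j` is at least `Ξ(s) = √(λ_min(H̄_s)/2) > 0`. -/
theorem limit_basis_well_conditioned (s : ℕ) (hs : 1 ≤ s)
    (hH : (normHilbert s).IsHermitian) :
    0 < Real.sqrt ((⨅ i, hH.eigenvalues i) / 2) ∧
    ∃ C : ℕ, ∀ ζ ∈ Set.Ioc (-Real.pi) Real.pi, ∀ N : ℕ, C ≤ N →
      ∀ u : ℕ → EuclideanSpace ℂ (Fin (N + 1)),
        (∀ j, ∀ k : Fin (N + 1),
          u j k = (Complex.I * (k : ℕ)) ^ (j - 1) * Complex.exp (Complex.I * (k : ℕ) * ζ)) →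
        ∀ c : EuclideanSpace ℂ (Fin s),
          Real.sqrt ((⨅ i, hH.eigenvalues i) / 2) * ‖c‖ ≤
            ‖∑ j : Fin s, c j • (‖u ((j : ℕ) + 1)‖⁻¹ • u ((j : ℕ) + 1))‖ := by
  have hne : Nonempty (Fin s) := ⟨⟨0, hs⟩⟩
  set lam : ℝ := ⨅ i, hH.eigenvalues i with hlam_def
  have hlam_le : ∀ i, lam ≤ hH.eigenvalues i := fun i =>
    ciInf_le (Finite.bddBelow_range _) i
  have hlam_pos : 0 < lam := by
    obtain ⟨i₀, hi₀⟩ := exists_eq_ciInf_of_finite (f := hH.eigenvalues)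
    rw [hlam_def, ← hi₀]
    exact (normHilbert_posDef s).eigenvalues_pos i₀
  refine ⟨Real.sqrt_pos.2 (by positivity), ?_⟩
  set ε : ℝ := lam / (2*s) with hε_def
  have hs' : (0:ℝ) < (s:ℝ) := by exact_mod_cast hs
  have hε_pos : 0 < ε := by positivity
  have hεs : ε * s = lam / 2 := by rw [hε_def]; field_simp
  obtain ⟨C₀, hC₀⟩ := exists_nat_gt ((2:ℝ)^(2*s) * (2*s) / lam)
  refine ⟨max C₀ 1, ?_⟩
  intro ζ hζ N hCN u hu c
  have hN1 : 1 ≤ N := le_trans (le_max_right _ _) hCN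
  have hN' : (0:ℝ) < (N:ℝ) := by exact_mod_cast hN1
  -- the entrywise error bound
  have hεN : (2:ℝ)^(2*s) / N ≤ ε := by
    have hNC : ((2:ℝ)^(2*s) * (2*s) / lam) < N := by
      calc ((2:ℝ)^(2*s) * (2*s) / lam) < C₀ := hC₀
        _ ≤ N := by exact_mod_cast le_trans (le_max_left _ _) hCN
    rw [div_lt_iff₀ hlam_pos] at hNC
    rw [hε_def, div_le_div_iff₀ hN' (by positivity)]
    nlinarith
  -- identify the vectors
  have hu' : ∀ j : Fin s, ∀ k : Fin (N+1), u ((j:ℕ)+1) k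
      = (Complex.I * (k:ℕ))^(j:ℕ) * Complex.exp (Complex.I * (k:ℕ) * ζ) := by
    intro j k
    have h := hu ((j:ℕ)+1) k
    simpa using h
  have hnorm : ∀ j : Fin s, ‖u ((j:ℕ)+1)‖ = Real.sqrt (powS (2*(j:ℕ)) N) :=
    fun j => norm_u _ _ (hu' j)
  have hinner : ∀ j l : Fin s, (inner ℂ (u ((j:ℕ)+1)) (u ((l:ℕ)+1)) : ℂ)
      = (starRingEnd ℂ Complex.I)^(j:ℕ) * Complex.I^(l:ℕ) * ((powS ((j:ℕ)+(l:ℕ)) N : ℝ) : ℂ) :=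
    fun j l => inner_u _ _ _ _ (hu' j) (hu' l)
  set gm : Fin s → Fin s → ℝ := fun j l => powS ((j:ℕ)+(l:ℕ)) N /
      (Real.sqrt (powS (2*(j:ℕ)) N) * Real.sqrt (powS (2*(l:ℕ)) N)) with hgm
  set d : Fin s → ℂ := fun j => c j * Complex.I^(j:ℕ) with hd
  set v : EuclideanSpace ℂ (Fin (N+1)) :=
    ∑ j : Fin s, c j • (‖u ((j:ℕ)+1)‖⁻¹ • u ((j:ℕ)+1)) with hv
  have hsq_pos : ∀ j : Fin s, (0:ℝ) < Real.sqrt (powS (2*(j:ℕ)) N) :=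
    fun j => Real.sqrt_pos.2 (powS_pos hN1)
  have hwinner : ∀ j l : Fin s,
      (inner ℂ (‖u ((j:ℕ)+1)‖⁻¹ • u ((j:ℕ)+1) : EuclideanSpace ℂ (Fin (N+1)))
        (‖u ((l:ℕ)+1)‖⁻¹ • u ((l:ℕ)+1)) : ℂ)
      = (starRingEnd ℂ Complex.I)^(j:ℕ) * Complex.I^(l:ℕ) * ((gm j l : ℝ) : ℂ) := by
    intro j l
    rw [RCLike.real_smul_eq_coe_smul (K := ℂ) (r := ‖u ((j:ℕ)+1)‖⁻¹),
      RCLike.real_smul_eq_coe_smul (K := ℂ) (r := ‖u ((l:ℕ)+1)‖⁻¹),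
      inner_smul_left, inner_smul_right, hinner j l, hnorm j, hnorm l, RCLike.conj_ofReal]
    have haj : ((Real.sqrt (powS (2*(j:ℕ)) N) : ℝ) : ℂ) ≠ 0 := by
      exact_mod_cast (hsq_pos j).ne'
    have hal : ((Real.sqrt (powS (2*(l:ℕ)) N) : ℝ) : ℂ) ≠ 0 := by
      exact_mod_cast (hsq_pos l).ne'
    simp only [hgm]
    push_cast
    field_simp
    rw [mul_assoc, mul_div_assoc]
    simp [haj, hal]
  have hvv : (inner ℂ v v : ℂ) = ∑ j : Fin s, ∑ l : Fin s,
      (starRingEnd ℂ) (d j) * d l * ((gm j l : ℝ) : ℂ) := by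
    rw [hv, sum_inner]
    apply Finset.sum_congr rfl; intro j _
    rw [inner_smul_left, inner_sum, Finset.mul_sum]
    apply Finset.sum_congr rfl; intro l _
    rw [inner_smul_right, hwinner j l, hd]
    simp only [_root_.map_mul, map_pow]
    ring
  have hrev : ‖v‖^2 = ∑ j : Fin s, ∑ l : Fin s,
      gm j l * ((starRingEnd ℂ) (d j) * d l).re := by
    have h := inner_self_eq_norm_sq (𝕜 := ℂ) v
    rw [← h, hvv, RCLike.re_to_complex, Complex.re_sum]
    apply Finset.sum_congr rfl; intro j _
    rw [Complex.re_sum]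
    apply Finset.sum_congr rfl; intro l _
    simp [Complex.mul_re]
    ring
  have hcsq : ‖c‖^2 = ∑ j : Fin s, ‖c j‖^2 := by
    rw [EuclideanSpace.norm_eq, Real.sq_sqrt (Finset.sum_nonneg fun j _ => sq_nonneg _)]
  have hd_normSq : ∀ j, Complex.normSq (d j) = ‖c j‖^2 := by
    intro j
    simp only [hd]
    rw [Complex.normSq_mul, ← Complex.sq_norm (Complex.I ^ (j:ℕ)), norm_pow, Complex.norm_I,
      one_pow, one_pow, mul_one, Complex.normSq_eq_norm_sq]
  have hA := rayleigh_lower_complex hH hlam_le d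
  simp_rw [hd_normSq] at hA
  -- error bounds
  have herr : ∀ j l : Fin s, -(ε * (‖c j‖ * ‖c l‖))
      ≤ (gm j l - normHilbert s j l) * ((starRingEnd ℂ) (d j) * d l).re := by
    intro j l
    have h1 : |gm j l - normHilbert s j l| ≤ ε :=
      le_trans (by simpa [hgm] using entry_bound (s := s) hN1 j l) hεN
    have h2 : |((starRingEnd ℂ) (d j) * d l).re| ≤ ‖c j‖ * ‖c l‖ := by
      calc |((starRingEnd ℂ) (d j) * d l).re|
          ≤ ‖(starRingEnd ℂ) (d j) * d l‖ := Complex.abs_re_le_norm _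
        _ = ‖d j‖ * ‖d l‖ := by
            rw [norm_mul, Complex.norm_conj]
        _ = ‖c j‖ * ‖c l‖ := by
            simp only [hd]
            simp [norm_mul, norm_pow, Complex.norm_I]
    calc -(ε * (‖c j‖ * ‖c l‖))
        ≤ -(|gm j l - normHilbert s j l| * |((starRingEnd ℂ) (d j) * d l).re|) := by
          apply neg_le_neg
          exact mul_le_mul h1 h2 (abs_nonneg _) hε_pos.le
      _ = -|(gm j l - normHilbert s j l) * ((starRingEnd ℂ) (d j) * d l).re| := by
          rw [abs_mul]
      _ ≤ _ := neg_abs_le _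
  have hsum_err : -(ε * ((s:ℝ) * ∑ j : Fin s, ‖c j‖^2))
      ≤ ∑ j : Fin s, ∑ l : Fin s,
        (gm j l - normHilbert s j l) * ((starRingEnd ℂ) (d j) * d l).re := by
    calc -(ε * ((s:ℝ) * ∑ j : Fin s, ‖c j‖^2))
        ≤ -(ε * (∑ j : Fin s, ‖c j‖)^2) := by
          apply neg_le_neg
          apply mul_le_mul_of_nonneg_left ?_ hε_pos.le
          have h := sq_sum_le_card_mul_sum_sq (s := (univ : Finset (Fin s)))
            (f := fun j => ‖c j‖)
          simpa [Finset.card_univ] using h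
      _ = ∑ j : Fin s, ∑ l : Fin s, -(ε * (‖c j‖ * ‖c l‖)) := by
          rw [sq, Finset.sum_mul_sum, Finset.mul_sum, ← Finset.sum_neg_distrib]
          apply Finset.sum_congr rfl; intro j _
          rw [Finset.mul_sum, ← Finset.sum_neg_distrib]
      _ ≤ _ := Finset.sum_le_sum fun j _ => Finset.sum_le_sum fun l _ => herr j l
  -- combine
  have hquad : (lam/2) * ‖c‖^2 ≤ ‖v‖^2 := by
    rw [hrev, hcsq]
    have hsplit : ∑ j : Fin s, ∑ l : Fin s, gm j l * ((starRingEnd ℂ) (d j) * d l).re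
        = (∑ j : Fin s, ∑ l : Fin s, normHilbert s j l * ((starRingEnd ℂ) (d j) * d l).re)
          + ∑ j : Fin s, ∑ l : Fin s,
            (gm j l - normHilbert s j l) * ((starRingEnd ℂ) (d j) * d l).re := by
      rw [← Finset.sum_add_distrib]
      apply Finset.sum_congr rfl; intro j _
      rw [← Finset.sum_add_distrib]
      apply Finset.sum_congr rfl; intro l _
      ring
    rw [hsplit]
    have hepsSig : ε * ((s:ℝ) * ∑ j : Fin s, ‖c j‖^2) = (lam/2) * ∑ j : Fin s, ‖c j‖^2 := by
      rw [← mul_assoc, mul_comm ε (s:ℝ), mul_comm (s:ℝ) ε, hεs]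
    linarith [hA, hsum_err]
  have h0 : Real.sqrt (lam/2) * ‖c‖ = Real.sqrt ((lam/2) * ‖c‖^2) := by
    rw [Real.sqrt_mul (by positivity), Real.sqrt_sq (norm_nonneg _)]
  rw [h0]
  calc Real.sqrt ((lam/2) * ‖c‖^2) ≤ Real.sqrt (‖v‖^2) := Real.sqrt_le_sqrt hquad
    _ = ‖v‖ := Real.sqrt_sq (norm_nonneg _)
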